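/- Compound probability as conjunction: for events E, H, K with HK ≠ ∅, K ≠ ∅, the conjunction of conditional random quantities satisfies (E|HK) ∧ (H|K) = EH|K, and consequently ℙ[(E|HK) ∧ (H|K)] = P(EH|K) = P(E|HK)·P(H|K). -/
import Mathlib


/-- Indicator (in `ℝ`) of an event. -/
noncomputable def ind {Ω : Type*} (A : Set Ω) : Ω → ℝ := A.indicator 1

/-- The indicator of the conditional event `A|H` with `x = P(A|H)`. -/
noncomputable def condRQ {Ω : Type*} (A H : Set Ω) (x : ℝ) : Ω → ℝ :=
  fun ω => ind (A ∩ H) ω + x * ind Hᶜ ω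

/-- The conjunction `(A|H) ∧ (B|K)` as a random quantity (values
`1, 0, x, y, z` on `AHBK`; `¬AH ∨ ¬BK`; `¬HBK`; `AH¬K`; `¬H¬K`). -/
noncomputable def conjRQ {Ω : Type*} (A H B K : Set Ω) (x y z : ℝ) : Ω → ℝ :=
  fun ω => ind (A ∩ H ∩ (B ∩ K)) ω + x * ind (Hᶜ ∩ B ∩ K) ω
    + y * ind (A ∩ H ∩ Kᶜ) ω + z * ind (Hᶜ ∩ Kᶜ) ω

/-- Compound probability as conjunction: for events `E, H, K` with `HK ≠ ∅`,
`K ≠ ∅`, with `x = P(E|HK)`, `y = P(H|K)`, the conjunction satisfies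
`(E|HK) ∧ (H|K) = EH|K` (as random quantities, for any common prevision
`z = ℙ[(E|HK) ∧ (H|K)] = P(EH|K)`); consequently, for any finitely additive
probability `P` satisfying the compound probability rules
`P(EHK) = x·P(HK)`, `P(HK) = y·P(K)`, `P(EHK) = p·P(K)` with `P(K) > 0`,
one gets `ℙ[(E|HK) ∧ (H|K)] = P(EH|K) = P(E|HK)·P(H|K)`, i.e. `p = x·y`. -/
theorem compound_probability_conj {Ω : Type*} (E H K : Set Ω)
    (hHK : (H ∩ K).Nonempty) (hK : K.Nonempty) (x y : ℝ) :
    (∀ z : ℝ, ∀ ω : Ω,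
        conjRQ E (H ∩ K) H K x y z ω = condRQ (E ∩ H) K z ω) ∧
    (∀ (P : Set Ω → ℝ) (p : ℝ),
        P (E ∩ H ∩ K) = x * P (H ∩ K) → P (H ∩ K) = y * P K →
        P (E ∩ H ∩ K) = p * P K → 0 < P K → p = x * y) := by
  constructor
  · intro z ω
    simp only [conjRQ, condRQ, ind, Set.indicator_apply, Set.mem_inter_iff,
      Set.mem_compl_iff, Pi.one_apply]
    by_cases hE : ω ∈ E <;> by_cases hH : ω ∈ H <;> by_cases hKω : ω ∈ K <;>
      simp [hE, hH, hKω]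
  · intro P p h1 h2 h3 hPK
    have : p * P K = x * y * P K := by rw [← h3, h1, h2]; ring
    exact mul_right_cancel₀ (ne_of_gt hPK) this
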